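/- Let G be a K4^- -free, house-free, net-free graph and let B be a maximal clique of G with at least 3 vertices. Then at most two vertices of B have a neighbor outside B. -/

import Mathlib

set_option maxRecDepth 8000


open SimpleGraph

variable {V : Type*}

/-- `G` contains an induced copy of `H`. -/
def HasInducedCopy {W : Type*} (H : SimpleGraph W) (G : SimpleGraph V) : Prop :=
  ∃ f : W ↪ V, ∀ a b, G.Adj (f a) (f b) ↔ H.Adj a b

/-- The diamond `K₄⁻`: the complete graph on four vertices minus the edge `01`. -/
def diamond : SimpleGraph (Fin 4) :=
  SimpleGraph.fromRel (fun a b => ¬((a = 0 ∧ b = 1) ∨ (a = 1 ∧ b = 0)))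

/-- The house: the complement of the path on five vertices. -/
def house : SimpleGraph (Fin 5) := (SimpleGraph.pathGraph 5)ᶜ

/-- The net: a triangle `012` with pendant vertices `3, 4, 5` attached to `0, 1, 2`. -/
def net : SimpleGraph (Fin 6) :=
  SimpleGraph.fromRel (fun a b =>
    (a = 0 ∧ b = 1) ∨ (a = 0 ∧ b = 2) ∨ (a = 1 ∧ b = 2) ∨
    (a = 0 ∧ b = 3) ∨ (a = 1 ∧ b = 4) ∨ (a = 2 ∧ b = 5))

instance diamondDec : DecidableRel diamond.Adj := fun a b =>
  decidable_of_iff _ (SimpleGraph.fromRel_adj _ a b).symm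

instance netDec : DecidableRel net.Adj := fun a b =>
  decidable_of_iff _ (SimpleGraph.fromRel_adj _ a b).symm

instance houseDec : DecidableRel house.Adj := fun a b =>
  decidable_of_iff (a ≠ b ∧ ¬(a.val + 1 = b.val ∨ b.val + 1 = a.val)) (by
    rw [house, SimpleGraph.compl_adj, SimpleGraph.pathGraph_adj])

lemma diamond_embed (G : SimpleGraph V)
    (w t u v : V) (hwt : ¬ G.Adj w t) (hwu : G.Adj w u) (hwv : G.Adj w v)
    (htu : G.Adj t u) (htv : G.Adj t v) (huv : G.Adj u v) (hne_wt : w ≠ t) :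
    HasInducedCopy diamond G := by
  have nww : ¬ G.Adj w w := G.loopless.irrefl w
  have ntt : ¬ G.Adj t t := G.loopless.irrefl t
  have nuu : ¬ G.Adj u u := G.loopless.irrefl u
  have nvv : ¬ G.Adj v v := G.loopless.irrefl v
  have htw : ¬ G.Adj t w := fun h => hwt h.symm
  have huw := hwu.symm; have hvw := hwv.symm
  have hut := htu.symm; have hvt := htv.symm; have hvu := huv.symm
  have hne_wu := hwu.ne; have hne_wv := hwv.ne; have hne_tu := htu.ne
  have hne_tv := htv.ne; have hne_uv := huv.ne
  refine ⟨⟨![w, t, u, v], ?_⟩, ?_⟩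
  · intro a b h
    fin_cases a <;> fin_cases b <;> simp_all
  · intro a b
    fin_cases a <;> fin_cases b <;> simp only [Function.Embedding.coeFn_mk] <;>
      first
        | exact iff_of_true (by assumption) (by decide)
        | exact iff_of_false (by assumption) (by decide)

/-- house: triangle x z y, square x a b y (a ~ x, b ~ y, a ~ b). -/
lemma house_embed (G : SimpleGraph V)
    (x y z a b : V) (hxy : G.Adj x y) (hxz : G.Adj x z) (hyz : G.Adj y z)
    (hxa : G.Adj x a) (hyb : G.Adj y b) (hab : G.Adj a b)
    (nxb : ¬ G.Adj x b) (nzb : ¬ G.Adj z b) (nza : ¬ G.Adj z a) (nya : ¬ G.Adj y a)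
    (hne_xb : x ≠ b) (hne_zb : z ≠ b) (hne_za : z ≠ a) (hne_ya : y ≠ a) :
    HasInducedCopy house G := by
  have nxx : ¬ G.Adj x x := G.loopless.irrefl x
  have nyy : ¬ G.Adj y y := G.loopless.irrefl y
  have nzz : ¬ G.Adj z z := G.loopless.irrefl z
  have naa : ¬ G.Adj a a := G.loopless.irrefl a
  have nbb : ¬ G.Adj b b := G.loopless.irrefl b
  have nbx : ¬ G.Adj b x := fun h => nxb h.symm
  have nbz : ¬ G.Adj b z := fun h => nzb h.symm
  have naz : ¬ G.Adj a z := fun h => nza h.symm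
  have nay : ¬ G.Adj a y := fun h => nya h.symm
  have hyx := hxy.symm; have hzx := hxz.symm; have hzy := hyz.symm
  have hax := hxa.symm; have hby := hyb.symm; have hba := hab.symm
  have h1 := hxy.ne; have h2 := hxz.ne; have h3 := hyz.ne
  have h4 := hxa.ne; have h5 := hyb.ne; have h6 := hab.ne
  refine ⟨⟨![x, b, z, a, y], ?_⟩, ?_⟩
  · intro p q h
    fin_cases p <;> fin_cases q <;> simp_all
  · intro p q
    fin_cases p <;> fin_cases q <;> simp only [Function.Embedding.coeFn_mk] <;>
      first
        | exact iff_of_true (by assumption) (by decide)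
        | exact iff_of_false (by assumption) (by decide)

lemma net_embed (G : SimpleGraph V)
    (x y z a b c : V) (hxy : G.Adj x y) (hxz : G.Adj x z) (hyz : G.Adj y z)
    (hxa : G.Adj x a) (hyb : G.Adj y b) (hzc : G.Adj z c)
    (nxb : ¬ G.Adj x b) (nxc : ¬ G.Adj x c) (nya : ¬ G.Adj y a)
    (nyc : ¬ G.Adj y c) (nza : ¬ G.Adj z a) (nzb : ¬ G.Adj z b)
    (nab : ¬ G.Adj a b) (nac : ¬ G.Adj a c) (nbc : ¬ G.Adj b c)
    (hne_xb : x ≠ b) (hne_xc : x ≠ c) (hne_ya : y ≠ a) (hne_yc : y ≠ c)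
    (hne_za : z ≠ a) (hne_zb : z ≠ b)
    (hne_ab : a ≠ b) (hne_ac : a ≠ c) (hne_bc : b ≠ c) :
    HasInducedCopy net G := by
  have nxx : ¬ G.Adj x x := G.loopless.irrefl x
  have nyy : ¬ G.Adj y y := G.loopless.irrefl y
  have nzz : ¬ G.Adj z z := G.loopless.irrefl z
  have naa : ¬ G.Adj a a := G.loopless.irrefl a
  have nbb : ¬ G.Adj b b := G.loopless.irrefl b
  have ncc : ¬ G.Adj c c := G.loopless.irrefl c
  have nbx : ¬ G.Adj b x := fun h => nxb h.symm
  have ncx : ¬ G.Adj c x := fun h => nxc h.symm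
  have nay : ¬ G.Adj a y := fun h => nya h.symm
  have ncy : ¬ G.Adj c y := fun h => nyc h.symm
  have naz : ¬ G.Adj a z := fun h => nza h.symm
  have nbz : ¬ G.Adj b z := fun h => nzb h.symm
  have nba : ¬ G.Adj b a := fun h => nab h.symm
  have nca : ¬ G.Adj c a := fun h => nac h.symm
  have ncb : ¬ G.Adj c b := fun h => nbc h.symm
  have hyx := hxy.symm; have hzx := hxz.symm; have hzy := hyz.symm
  have hax := hxa.symm; have hby := hyb.symm; have hcz := hzc.symm
  have h1 := hxy.ne; have h2 := hxz.ne; have h3 := hyz.ne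
  have h4 := hxa.ne; have h5 := hyb.ne; have h6 := hzc.ne
  have r1 := h1.symm; have r2 := h2.symm; have r3 := h3.symm
  have r4 := h4.symm; have r5 := h5.symm; have r6 := h6.symm
  have s1 := hne_xb.symm; have s2 := hne_xc.symm; have s3 := hne_ya.symm
  have s4 := hne_yc.symm; have s5 := hne_za.symm; have s6 := hne_zb.symm
  have s7 := hne_ab.symm; have s8 := hne_ac.symm; have s9 := hne_bc.symm
  refine ⟨⟨![x, y, z, a, b, c], ?_⟩, ?_⟩
  · intro p q h
    fin_cases p <;> fin_cases q <;> (try rfl) <;>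
      (simp at h; exact absurd h (by assumption))
  · intro p q
    fin_cases p <;> fin_cases q <;> simp only [Function.Embedding.coeFn_mk] <;>
      first
        | exact iff_of_true (by assumption) (by decide)
        | exact iff_of_false (by assumption) (by decide)

theorem stmt6 (G : SimpleGraph V)
    (hd : ¬HasInducedCopy diamond G) (hh : ¬HasInducedCopy house G)
    (hn : ¬HasInducedCopy net G)
    (B : Set V) (hB : G.IsClique B)
    (hBmax : ∀ C : Set V, G.IsClique C → B ⊆ C → B = C)
    (hB3 : ∃ x ∈ B, ∃ y ∈ B, ∃ z ∈ B, x ≠ y ∧ x ≠ z ∧ y ≠ z) :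
    {u ∈ B | ∃ w ∉ B, G.Adj u w}.ncard ≤ 2 := by
  -- key: a vertex outside B has at most one neighbor in B
  have key : ∀ w ∉ B, ∀ u ∈ B, G.Adj u w → ∀ v ∈ B, v ≠ u → ¬ G.Adj v w := by
    intro w hw u hu huw v hv hvu hadj
    have hex : ∃ t ∈ B, ¬ G.Adj t w := by
      by_contra h
      push_neg at h
      have hcl : G.IsClique (insert w B) := by
        intro p hp q hq hpq
        rcases hp with rfl | hp
        · rcases hq with rfl | hq
          · exact absurd rfl hpq
          · exact (h q hq).symm
        · rcases hq with rfl | hq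
          · exact h p hp
          · exact hB hp hq hpq
      have := hBmax _ hcl (Set.subset_insert w B)
      exact hw (this ▸ Set.mem_insert w B)
    obtain ⟨t, ht, htw⟩ := hex
    have htu : t ≠ u := fun h => htw (h ▸ huw)
    have htv : t ≠ v := fun h => htw (h ▸ hadj)
    exact hd (diamond_embed G w t u v (fun h => htw h.symm) huw.symm hadj.symm
      (hB ht hu htu) (hB ht hv htv) (hB hu hv hvu.symm)
      (fun h => hw (h ▸ ht)))
  by_contra hcon
  push_neg at hcon
  have hfin : {u ∈ B | ∃ w ∉ B, G.Adj u w}.Finite :=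
    Set.finite_of_ncard_ne_zero (by omega)
  obtain ⟨x, hx, y, hy, z, hz, hne_xy, hne_xz, hne_yz⟩ :=
    (Set.two_lt_ncard hfin).mp hcon
  obtain ⟨hxB, a, ha, hxa⟩ := hx
  obtain ⟨hyB, b, hb, hyb⟩ := hy
  obtain ⟨hzB, c, hc, hzc⟩ := hz
  -- clique edges
  have hxy : G.Adj x y := hB hxB hyB hne_xy
  have hxz : G.Adj x z := hB hxB hzB hne_xz
  have hyz : G.Adj y z := hB hyB hzB hne_yz
  -- uniqueness of neighbors in B
  have nya : ¬ G.Adj y a := key a ha x hxB hxa y hyB (Ne.symm hne_xy)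
  have nza : ¬ G.Adj z a := key a ha x hxB hxa z hzB (Ne.symm hne_xz)
  have nxb : ¬ G.Adj x b := key b hb y hyB hyb x hxB hne_xy
  have nzb : ¬ G.Adj z b := key b hb y hyB hyb z hzB (Ne.symm hne_yz)
  have nxc : ¬ G.Adj x c := key c hc z hzB hzc x hxB hne_xz
  have nyc : ¬ G.Adj y c := key c hc z hzB hzc y hyB hne_yz
  -- external vertices distinct from clique vertices
  have hne_xb : x ≠ b := fun h => hb (h ▸ hxB)
  have hne_xc : x ≠ c := fun h => hc (h ▸ hxB)
  have hne_ya : y ≠ a := fun h => ha (h ▸ hyB)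
  have hne_yc : y ≠ c := fun h => hc (h ▸ hyB)
  have hne_za : z ≠ a := fun h => ha (h ▸ hzB)
  have hne_zb : z ≠ b := fun h => hb (h ▸ hzB)
  -- external vertices pairwise distinct
  have hne_ab : a ≠ b := fun h => nya (h ▸ hyb)
  have hne_ac : a ≠ c := fun h => nza (h ▸ hzc)
  have hne_bc : b ≠ c := fun h => nzb (h ▸ hzc)
  by_cases hab : G.Adj a b
  · -- house on (x, b, z, a, y) : triangle x y z, a~x, b~y, a~b
    exact hh (house_embed G x y z a b hxy hxz hyz hxa hyb hab
      nxb nzb nza nya hne_xb hne_zb hne_za hne_ya)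
  by_cases hac : G.Adj a c
  · -- house with triangle x z y : a~x, c~z, a~c
    exact hh (house_embed G x z y a c hxz hxy hyz.symm hxa hzc hac
      nxc nyc nya nza hne_xc hne_yc hne_ya hne_za)
  by_cases hbc : G.Adj b c
  · -- house with triangle y z x : b~y, c~z, b~c
    exact hh (house_embed G y z x b c hyz hxy.symm hxz.symm hyb hzc hbc
      nyc nxc nxb nzb hne_yc hne_xc hne_xb hne_zb)
  · exact hn (net_embed G x y z a b c hxy hxz hyz hxa hyb hzc
      nxb nxc nya nyc nza nzb hab hac hbc
      hne_xb hne_xc hne_ya hne_yc hne_za hne_zb hne_ab hne_ac hne_bc)
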